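/- For every θ ∈ [0, T₀] and every s ∈ [0, T], ⟨η(T, s, x₀(θ)) − η(0, s, x₀(θ)), N(θ)⟩ = ∫_{s−T+θ}^{s+θ} ⟨ d(τ, 0) φ(τ−θ, x₀(τ)), ⟨ẋ₀(θ), N(θ)⟩ · y(τ)^⊤ + ⟨y(θ), N(θ)⟩ · ẋ₀(τ)^⊥ ⟩ dτ. (Lemma 3) -/

import Mathlib

open scoped RealInnerProductSpace

/-- For `a = (a₁, a₂) ∈ ℝ²`, `a^⊥ = (−a₂, a₁)`. -/
noncomputable def perpVec (a : EuclideanSpace ℝ (Fin 2)) : EuclideanSpace ℝ (Fin 2) :=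
  WithLp.toLp 2 ![-(a 1), a 0]

/-- For `a = (a₁, a₂) ∈ ℝ²`, `a^⊤ = (a₂, −a₁)`. -/
noncomputable def topVec (a : EuclideanSpace ℝ (Fin 2)) : EuclideanSpace ℝ (Fin 2) :=
  WithLp.toLp 2 ![a 1, -(a 0)]

/-- The 2×2 real matrix with rows `a` and `b`. -/
noncomputable def rowsMatrix (a b : EuclideanSpace ℝ (Fin 2)) :
    Matrix (Fin 2) (Fin 2) ℝ := !![a 0, a 1; b 0, b 1]

/-- The 2×2 real matrix with columns `a` and `b`. -/
noncomputable def columnsMatrix (a b : EuclideanSpace ℝ (Fin 2)) :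
    Matrix (Fin 2) (Fin 2) ℝ := !![a 0, b 0; a 1, b 1]



open scoped RealInnerProductSpace
open Set Filter

/-! ### Auxiliary machinery -/

/-- Entry `i j` of the Jacobian of `ψ` at `x`. -/
noncomputable def mkEntry (ψ : EuclideanSpace ℝ (Fin 2) → EuclideanSpace ℝ (Fin 2))
    (x : EuclideanSpace ℝ (Fin 2)) (i j : Fin 2) : ℝ :=
  fderiv ℝ ψ x (EuclideanSpace.single j 1) i

lemma mk_decomp (ψ : EuclideanSpace ℝ (Fin 2) → EuclideanSpace ℝ (Fin 2))
    (x v : EuclideanSpace ℝ (Fin 2)) :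
    fderiv ℝ ψ x v = v 0 • fderiv ℝ ψ x (EuclideanSpace.single 0 1)
      + v 1 • fderiv ℝ ψ x (EuclideanSpace.single 1 1) := by
  have hv : v = v 0 • (EuclideanSpace.single 0 (1:ℝ)) + v 1 • (EuclideanSpace.single 1 (1:ℝ)) := by
    ext j
    fin_cases j <;>
      simp [PiLp.add_apply, PiLp.smul_apply, EuclideanSpace.single_apply, smul_eq_mul]
  conv_lhs => rw [hv]
  rw [map_add, map_smul, map_smul]

lemma mk_comp_ode {ψ : EuclideanSpace ℝ (Fin 2) → EuclideanSpace ℝ (Fin 2)}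
    {F : ℝ → EuclideanSpace ℝ (Fin 2)} {c p : EuclideanSpace ℝ (Fin 2)} {t : ℝ}
    (h : HasDerivAt F (fderiv ℝ ψ p (F t) + c) t) (i : Fin 2) :
    HasDerivAt (fun t => F t i)
      (F t 0 * mkEntry ψ p i 0 + F t 1 * mkEntry ψ p i 1 + c i) t := by
  have h2 := (EuclideanSpace.proj i :
    EuclideanSpace ℝ (Fin 2) →L[ℝ] ℝ).hasFDerivAt.comp_hasDerivAt t h
  have h3 : (EuclideanSpace.proj i :
      EuclideanSpace ℝ (Fin 2) →L[ℝ] ℝ) (fderiv ℝ ψ p (F t) + c)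
      = F t 0 * mkEntry ψ p i 0 + F t 1 * mkEntry ψ p i 1 + c i := by
    rw [mk_decomp ψ p (F t)]
    simp [mkEntry, PiLp.add_apply, PiLp.smul_apply, smul_eq_mul]
  rw [h3] at h2
  exact h2

lemma mk_comp_ode0 {ψ : EuclideanSpace ℝ (Fin 2) → EuclideanSpace ℝ (Fin 2)}
    {F : ℝ → EuclideanSpace ℝ (Fin 2)} {p : EuclideanSpace ℝ (Fin 2)} {t : ℝ}
    (h : HasDerivAt F (fderiv ℝ ψ p (F t)) t) (i : Fin 2) :
    HasDerivAt (fun t => F t i)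
      (F t 0 * mkEntry ψ p i 0 + F t 1 * mkEntry ψ p i 1) t := by
  have := mk_comp_ode (c := 0) (by simpa using h) i
  simpa using this

/-- The scalar quotient function realizing the pairing with the adjoint solution. -/
noncomputable def mkQuot (c₁ c₂ : ℝ) (F0 F1 Y0 Y1 U0 U1 : ℝ → ℝ) : ℝ → ℝ :=
  fun t => (c₁ * (F0 t * Y1 t - F1 t * Y0 t) + c₂ * (F1 t * U0 t - F0 t * U1 t))
    / (Y1 t * U0 t - Y0 t * U1 t)

lemma mkQuot_hasDeriv {c₁ c₂ : ℝ} {F0 F1 Y0 Y1 U0 U1 : ℝ → ℝ}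
    {a00 a01 a10 a11 b0 b1 : ℝ} {t : ℝ}
    (hF0 : HasDerivAt F0 (F0 t * a00 + F1 t * a01 + b0) t)
    (hF1 : HasDerivAt F1 (F0 t * a10 + F1 t * a11 + b1) t)
    (hY0 : HasDerivAt Y0 (Y0 t * a00 + Y1 t * a01) t)
    (hY1 : HasDerivAt Y1 (Y0 t * a10 + Y1 t * a11) t)
    (hU0 : HasDerivAt U0 (U0 t * a00 + U1 t * a01) t)
    (hU1 : HasDerivAt U1 (U0 t * a10 + U1 t * a11) t)
    (hW : Y1 t * U0 t - Y0 t * U1 t ≠ 0) :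
    HasDerivAt (mkQuot c₁ c₂ F0 F1 Y0 Y1 U0 U1)
      ((c₁ * (b0 * Y1 t - b1 * Y0 t) + c₂ * (b1 * U0 t - b0 * U1 t))
        / (Y1 t * U0 t - Y0 t * U1 t)) t := by
  have hP : HasDerivAt
      (fun t => c₁ * (F0 t * Y1 t - F1 t * Y0 t) + c₂ * (F1 t * U0 t - F0 t * U1 t))
      ((a00 + a11) * (c₁ * (F0 t * Y1 t - F1 t * Y0 t) + c₂ * (F1 t * U0 t - F0 t * U1 t))
        + (c₁ * (b0 * Y1 t - b1 * Y0 t) + c₂ * (b1 * U0 t - b0 * U1 t))) t := by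
    have := (((hF0.mul hY1).sub (hF1.mul hY0)).const_mul c₁).add
      (((hF1.mul hU0).sub (hF0.mul hU1)).const_mul c₂)
    exact this.congr_deriv (by ring)
  have hWd : HasDerivAt (fun t => Y1 t * U0 t - Y0 t * U1 t)
      ((a00 + a11) * (Y1 t * U0 t - Y0 t * U1 t)) t := by
    have := (hY1.mul hU0).sub (hY0.mul hU1)
    exact this.congr_deriv (by ring)
  have := hP.div hWd hW
  refine this.congr_deriv ?_
  field_simp
  ring

lemma mkQuot_hasDeriv0 {c₁ c₂ : ℝ} {F0 F1 Y0 Y1 U0 U1 : ℝ → ℝ}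
    {a00 a01 a10 a11 : ℝ} {t : ℝ}
    (hF0 : HasDerivAt F0 (F0 t * a00 + F1 t * a01) t)
    (hF1 : HasDerivAt F1 (F0 t * a10 + F1 t * a11) t)
    (hY0 : HasDerivAt Y0 (Y0 t * a00 + Y1 t * a01) t)
    (hY1 : HasDerivAt Y1 (Y0 t * a10 + Y1 t * a11) t)
    (hU0 : HasDerivAt U0 (U0 t * a00 + U1 t * a01) t)
    (hU1 : HasDerivAt U1 (U0 t * a10 + U1 t * a11) t)
    (hW : Y1 t * U0 t - Y0 t * U1 t ≠ 0) :
    HasDerivAt (mkQuot c₁ c₂ F0 F1 Y0 Y1 U0 U1) 0 t := by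
  have := mkQuot_hasDeriv (c₁ := c₁) (c₂ := c₂) (b0 := 0) (b1 := 0)
    (by simpa using hF0) (by simpa using hF1) hY0 hY1 hU0 hU1 hW
  simpa using this

/-- Global uniqueness for an autonomous ODE with a `C¹` vector field in the plane. -/
lemma my_ode_unique {ψ : EuclideanSpace ℝ (Fin 2) → EuclideanSpace ℝ (Fin 2)}
    (hψ : ContDiff ℝ 1 ψ) {f g : ℝ → EuclideanSpace ℝ (Fin 2)}
    (hf : ∀ t, HasDerivAt f (ψ (f t)) t) (hg : ∀ t, HasDerivAt g (ψ (g t)) t)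
    (h0 : f 0 = g 0) : ∀ t, f t = g t := by
  have hcf : Continuous f := continuous_iff_continuousAt.2 fun t => (hf t).continuousAt
  have hcg : Continuous g := continuous_iff_continuousAt.2 fun t => (hg t).continuousAt
  have hSc : IsClosed {t : ℝ | f t = g t} := isClosed_eq hcf hcg
  have hSo : IsOpen {t : ℝ | f t = g t} := by
    rw [isOpen_iff_mem_nhds]
    intro t₁ ht₁
    obtain ⟨K, u, hu, hlip⟩ := (hψ.contDiffAt (x := f t₁)).exists_lipschitzOnWith
    have hmf : ∀ᶠ t in nhds t₁, f t ∈ u := hcf.continuousAt hu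
    have hmg : ∀ᶠ t in nhds t₁, g t ∈ u := hcg.continuousAt (by
      have ht₁' : f t₁ = g t₁ := ht₁
      rwa [ht₁'] at hu)
    have hfev : ∀ᶠ t in nhds t₁, HasDerivAt f (ψ (f t)) t ∧ f t ∈ u :=
      hmf.mono fun t ht => ⟨hf t, ht⟩
    have hgev : ∀ᶠ t in nhds t₁, HasDerivAt g (ψ (g t)) t ∧ g t ∈ u :=
      hmg.mono fun t ht => ⟨hg t, ht⟩
    exact ODE_solution_unique_of_eventually (v := fun _ => ψ) (s := fun _ => u)
      (Filter.Eventually.of_forall fun _ => hlip) hfev hgev ht₁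
  have hS : {t : ℝ | f t = g t} = univ := IsClopen.eq_univ ⟨hSc, hSo⟩ ⟨0, h0⟩
  intro t
  have : t ∈ {t : ℝ | f t = g t} := hS ▸ mem_univ t
  exact this

/-- **Lemma 3.**  With `x₀` a periodic solution of `ẋ = ψ(x)` of least period
`T₀`, `y` a solution of the linearized system independent of `ẋ₀`, `T = k l T₀`,
`N(θ) = (y(θ)^⊤ ẋ₀(θ)^⊥) f(θ)` and `d(t,θ) = (det D(t+θ))⁻¹` where `D(t)` has
rows `y(t)^⊤` and `ẋ₀(t)^⊥`:  for every `θ ∈ [0,T₀]` and `s ∈ [0,T]`,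
`⟨η(T,s,x₀(θ)) − η(0,s,x₀(θ)), N(θ)⟩
  = ∫_{s−T+θ}^{s+θ} ⟨d(τ,0) φ(τ−θ, x₀(τ)),
      ⟨ẋ₀(θ), N(θ)⟩ y(τ)^⊤ + ⟨y(θ), N(θ)⟩ ẋ₀(τ)^⊥⟩ dτ`. -/
theorem eta_difference_inner_N_integral_formula
    (ψ : EuclideanSpace ℝ (Fin 2) → EuclideanSpace ℝ (Fin 2))
    (hψ : ContDiff ℝ 2 ψ)
    (T₁ : ℝ) (hT₁ : 0 < T₁)
    (φ : ℝ → EuclideanSpace ℝ (Fin 2) → EuclideanSpace ℝ (Fin 2))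
    (hφcont : Continuous fun p : ℝ × EuclideanSpace ℝ (Fin 2) => φ p.1 p.2)
    (hφper : ∀ t ξ, φ (t + T₁) ξ = φ t ξ)
    (T₀ : ℝ) (hT₀ : 0 < T₀)
    (x₀ : ℝ → EuclideanSpace ℝ (Fin 2))
    (hx₀sol : ∀ t : ℝ, HasDerivAt x₀ (ψ (x₀ t)) t)
    (hx₀per : Function.Periodic x₀ T₀)
    (hx₀least : ∀ p : ℝ, 0 < p → Function.Periodic x₀ p → T₀ ≤ p)
    (l k : ℕ) (hl : Nat.Prime l) (hk : Nat.Prime k)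
    (hratio : T₀ / T₁ = (l : ℝ) / (k : ℝ))
    (T : ℝ) (hT : T = (k : ℝ) * l * T₀)
    (Ω : ℝ → ℝ → EuclideanSpace ℝ (Fin 2) → EuclideanSpace ℝ (Fin 2))
    (hΩinit : ∀ t₀ ξ, Ω t₀ t₀ ξ = ξ)
    (hΩsol : ∀ t₀ ξ t, HasDerivAt (fun s => Ω s t₀ ξ) (ψ (Ω t t₀ ξ)) t)
    (η : ℝ → ℝ → EuclideanSpace ℝ (Fin 2) → EuclideanSpace ℝ (Fin 2))
    (hηinit : ∀ s ξ, η s s ξ = 0)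
    (hηsol : ∀ s ξ t, HasDerivAt (fun u => η u s ξ)
      (fderiv ℝ ψ (Ω t 0 ξ) (η t s ξ) + φ t (Ω t 0 ξ)) t)
    (y : ℝ → EuclideanSpace ℝ (Fin 2))
    (hysol : ∀ t : ℝ, HasDerivAt y (fderiv ℝ ψ (x₀ t) (y t)) t)
    (hyindep : ∀ t : ℝ, LinearIndependent ℝ ![ψ (x₀ t), y t])
    (f : ℝ → EuclideanSpace ℝ (Fin 2))
    (N : ℝ → EuclideanSpace ℝ (Fin 2))
    (hN : ∀ θ : ℝ, N θ =
      (WithLp.toLp 2 ((columnsMatrix (topVec (y θ)) (perpVec (ψ (x₀ θ)))).mulVec (f θ)) :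
        EuclideanSpace ℝ (Fin 2)))
    (D : ℝ → Matrix (Fin 2) (Fin 2) ℝ)
    (hD : ∀ t : ℝ, D t = rowsMatrix (topVec (y t)) (perpVec (ψ (x₀ t))))
    (d : ℝ → ℝ → ℝ)
    (hd : ∀ t θ : ℝ, d t θ = ((D (t + θ)).det)⁻¹) :
    ∀ θ ∈ Set.Icc 0 T₀, ∀ s ∈ Set.Icc 0 T,
      ⟪η T s (x₀ θ) - η 0 s (x₀ θ), N θ⟫ =
        ∫ τ in (s - T + θ)..(s + θ),
          ⟪d τ 0 • φ (τ - θ) (x₀ τ),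
            ⟪ψ (x₀ θ), N θ⟫ • topVec (y τ) + ⟪y θ, N θ⟫ • perpVec (ψ (x₀ τ))⟫ := by
  intro θ _ s _
  -- basic regularity
  have hψ1 : ContDiff ℝ 1 ψ := hψ.of_le one_le_two
  have hψd : Differentiable ℝ ψ := hψ1.differentiable one_ne_zero
  have hx₀c : Continuous x₀ := continuous_iff_continuousAt.2 fun t => (hx₀sol t).continuousAt
  have hyc : Continuous y := continuous_iff_continuousAt.2 fun t => (hysol t).continuousAt
  -- identification of the flow through x₀ θ
  have hΩeq : ∀ t, Ω t 0 (x₀ θ) = x₀ (t + θ) := by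
    have h2 : ∀ t, HasDerivAt (fun t => x₀ (t + θ)) (ψ (x₀ (t + θ))) t := fun t => by
      exact HasDerivAt.comp_add_const t θ (hx₀sol (t + θ))
    exact my_ode_unique hψ1 (hΩsol 0 (x₀ θ)) h2 (by rw [hΩinit]; norm_num)
  -- periodicity facts
  have hkR : (0:ℝ) < k := by exact_mod_cast hk.pos
  have hperx : ∀ τ, x₀ (τ + T) = x₀ τ := by
    intro τ
    have hTx : T = ((k * l : ℕ) : ℝ) * T₀ := by rw [hT]; push_cast; ring
    rw [hTx]
    exact (hx₀per.nat_mul (k * l)) τ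
  have hperφ : ∀ t ξ', φ (t + T) ξ' = φ t ξ' := by
    intro t ξ'
    have hkne : (k:ℝ) ≠ 0 := ne_of_gt hkR
    have hT₁ne : T₁ ≠ 0 := ne_of_gt hT₁
    have h1 : T₀ * k = (l:ℝ) * T₁ := (div_eq_div_iff hT₁ne hkne).mp hratio
    have hTφ : T = ((l * l : ℕ) : ℝ) * T₁ := by
      rw [hT]; push_cast; linear_combination (l:ℝ) * h1
    have hper : Function.Periodic (fun t => φ t ξ') T₁ := fun u => hφper u ξ'
    rw [hTφ]
    exact (hper.nat_mul (l * l)) t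
  -- vector-valued derivative facts at shifted times
  have hshift : ∀ (F : ℝ → EuclideanSpace ℝ (Fin 2)) (c t : ℝ) (V : EuclideanSpace ℝ (Fin 2)),
      HasDerivAt F V (t + c) → HasDerivAt (fun t => F (t + c)) V t := by
    intro F c t V h
    exact HasDerivAt.comp_add_const t c h
  have hUd : ∀ τ, HasDerivAt (fun τ => ψ (x₀ τ)) (fderiv ℝ ψ (x₀ τ) (ψ (x₀ τ))) τ :=
    fun τ => ((hψd (x₀ τ)).hasFDerivAt).comp_hasDerivAt τ (hx₀sol τ)
  have hYs : ∀ t, HasDerivAt (fun t => y (t + θ)) (fderiv ℝ ψ (x₀ (t + θ)) (y (t + θ))) t :=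
    fun t => hshift y θ t _ (hysol (t + θ))
  have hUs : ∀ t, HasDerivAt (fun t => ψ (x₀ (t + θ)))
      (fderiv ℝ ψ (x₀ (t + θ)) (ψ (x₀ (t + θ)))) t :=
    fun t => hshift _ θ t _ (hUd (t + θ))
  have hzd : ∀ t, HasDerivAt (fun t => η t s (x₀ θ))
      (fderiv ℝ ψ (x₀ (t + θ)) (η t s (x₀ θ)) + φ t (x₀ (t + θ))) t := by
    intro t
    have := hηsol s (x₀ θ) t
    rwa [hΩeq t] at this
  have hzTd : ∀ t, HasDerivAt (fun t => η (t + T) s (x₀ θ))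
      (fderiv ℝ ψ (x₀ (t + θ)) (η (t + T) s (x₀ θ)) + φ t (x₀ (t + θ))) t := by
    intro t
    have h1 := hshift (fun u => η u s (x₀ θ)) T t _ (hzd (t + T))
    have hx : x₀ (t + T + θ) = x₀ (t + θ) := by
      rw [show t + T + θ = (t + θ) + T by ring, hperx]
    rw [hx, hperφ t (x₀ (t + θ))] at h1
    exact h1
  have hvd : ∀ t, HasDerivAt (fun t => η (t + T) s (x₀ θ) - η t s (x₀ θ))
      (fderiv ℝ ψ (x₀ (t + θ)) (η (t + T) s (x₀ θ) - η t s (x₀ θ))) t := by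
    intro t
    have h := (hzTd t).sub (hzd t)
    refine h.congr_deriv ?_
    rw [map_sub]
    abel
  -- nonvanishing of the Wronskian-type determinant
  have hWne : ∀ τ, y τ 1 * ψ (x₀ τ) 0 - y τ 0 * ψ (x₀ τ) 1 ≠ 0 := by
    intro τ hW0
    have hli := (LinearIndependent.pair_iff).mp (hyindep τ)
    have e1 : (y τ 1) • (ψ (x₀ τ)) + (-(ψ (x₀ τ) 1)) • (y τ) = 0 := by
      ext j
      fin_cases j
      · simp only [Fin.zero_eta, Fin.isValue, PiLp.add_apply, PiLp.smul_apply, smul_eq_mul,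
          PiLp.zero_apply]
        linear_combination hW0
      · simp only [Fin.mk_one, Fin.isValue, PiLp.add_apply, PiLp.smul_apply, smul_eq_mul,
          PiLp.zero_apply]
        ring
    obtain ⟨hY1z, hU1z'⟩ := hli _ _ e1
    have hU1z : ψ (x₀ τ) 1 = 0 := by linarith [neg_eq_zero.mp hU1z']
    have e2 : (y τ 0) • (ψ (x₀ τ)) + (-(ψ (x₀ τ) 0)) • (y τ) = 0 := by
      ext j
      fin_cases j
      · simp only [Fin.zero_eta, Fin.isValue, PiLp.add_apply, PiLp.smul_apply, smul_eq_mul,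
          PiLp.zero_apply]
        ring
      · simp only [Fin.mk_one, Fin.isValue, PiLp.add_apply, PiLp.smul_apply, smul_eq_mul,
          PiLp.zero_apply]
        linear_combination -hW0
    obtain ⟨hY0z, hU0z'⟩ := hli _ _ e2
    have hU0z : ψ (x₀ τ) 0 = 0 := by linarith [neg_eq_zero.mp hU0z']
    have e3 : (1:ℝ) • (ψ (x₀ τ)) + (0:ℝ) • (y τ) = 0 := by
      ext j
      fin_cases j
      · simp only [Fin.zero_eta, Fin.isValue, PiLp.add_apply, PiLp.smul_apply, smul_eq_mul,
          PiLp.zero_apply, one_mul, zero_mul, add_zero]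
        exact hU0z
      · simp only [Fin.mk_one, Fin.isValue, PiLp.add_apply, PiLp.smul_apply, smul_eq_mul,
          PiLp.zero_apply, one_mul, zero_mul, add_zero]
        exact hU1z
    exact one_ne_zero (hli _ _ e3).1
  -- the scalar coefficients
  set c₁ : ℝ := ψ (x₀ θ) 0 * N θ 0 + ψ (x₀ θ) 1 * N θ 1 with hc₁
  set c₂ : ℝ := y θ 0 * N θ 0 + y θ 1 * N θ 1 with hc₂
  -- the two quotient functions
  set Gf : ℝ → ℝ := mkQuot c₁ c₂
    (fun t => η t s (x₀ θ) 0) (fun t => η t s (x₀ θ) 1)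
    (fun t => y (t + θ) 0) (fun t => y (t + θ) 1)
    (fun t => ψ (x₀ (t + θ)) 0) (fun t => ψ (x₀ (t + θ)) 1) with hGf
  set gf : ℝ → ℝ := mkQuot c₁ c₂
    (fun t => η (t + T) s (x₀ θ) 0 - η t s (x₀ θ) 0)
    (fun t => η (t + T) s (x₀ θ) 1 - η t s (x₀ θ) 1)
    (fun t => y (t + θ) 0) (fun t => y (t + θ) 1)
    (fun t => ψ (x₀ (t + θ)) 0) (fun t => ψ (x₀ (t + θ)) 1) with hgf
  -- the explicit integrand (absolute time version)
  set hfun : ℝ → ℝ := fun τ =>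
    (c₁ * (φ (τ - θ) (x₀ τ) 0 * y τ 1 - φ (τ - θ) (x₀ τ) 1 * y τ 0)
      + c₂ * (φ (τ - θ) (x₀ τ) 1 * ψ (x₀ τ) 0 - φ (τ - θ) (x₀ τ) 0 * ψ (x₀ τ) 1))
      / (y τ 1 * ψ (x₀ τ) 0 - y τ 0 * ψ (x₀ τ) 1) with hhfun
  -- derivative of Gf
  have hGd : ∀ t : ℝ, HasDerivAt Gf (hfun (t + θ)) t := by
    intro t
    have key := mkQuot_hasDeriv (c₁ := c₁) (c₂ := c₂)
      (F0 := fun t => η t s (x₀ θ) 0) (F1 := fun t => η t s (x₀ θ) 1)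
      (Y0 := fun t => y (t + θ) 0) (Y1 := fun t => y (t + θ) 1)
      (U0 := fun t => ψ (x₀ (t + θ)) 0) (U1 := fun t => ψ (x₀ (t + θ)) 1)
      (a00 := mkEntry ψ (x₀ (t + θ)) 0 0) (a01 := mkEntry ψ (x₀ (t + θ)) 0 1)
      (a10 := mkEntry ψ (x₀ (t + θ)) 1 0) (a11 := mkEntry ψ (x₀ (t + θ)) 1 1)
      (b0 := φ t (x₀ (t + θ)) 0) (b1 := φ t (x₀ (t + θ)) 1) (t := t)
      (mk_comp_ode (hzd t) 0) (mk_comp_ode (hzd t) 1)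
      (mk_comp_ode0 (hYs t) 0) (mk_comp_ode0 (hYs t) 1)
      (mk_comp_ode0 (hUs t) 0) (mk_comp_ode0 (hUs t) 1) (hWne (t + θ))
    rw [hGf]
    convert key using 1
    rw [hhfun]
    simp [add_sub_cancel_right]
  -- derivative of gf vanishes
  have hv' : ∀ (t : ℝ) (i : Fin 2), HasDerivAt (fun t => η (t + T) s (x₀ θ) i - η t s (x₀ θ) i)
      ((η (t + T) s (x₀ θ) 0 - η t s (x₀ θ) 0) * mkEntry ψ (x₀ (t + θ)) i 0
        + (η (t + T) s (x₀ θ) 1 - η t s (x₀ θ) 1) * mkEntry ψ (x₀ (t + θ)) i 1) t := by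
    intro t i
    have := mk_comp_ode0 (hvd t) i
    simpa only [PiLp.sub_apply] using this
  have hgd : ∀ t : ℝ, HasDerivAt gf 0 t := by
    intro t
    rw [hgf]
    exact mkQuot_hasDeriv0 (c₁ := c₁) (c₂ := c₂)
      (F0 := fun t => η (t + T) s (x₀ θ) 0 - η t s (x₀ θ) 0)
      (F1 := fun t => η (t + T) s (x₀ θ) 1 - η t s (x₀ θ) 1)
      (Y0 := fun t => y (t + θ) 0) (Y1 := fun t => y (t + θ) 1)
      (U0 := fun t => ψ (x₀ (t + θ)) 0) (U1 := fun t => ψ (x₀ (t + θ)) 1)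
      (a00 := mkEntry ψ (x₀ (t + θ)) 0 0) (a01 := mkEntry ψ (x₀ (t + θ)) 0 1)
      (a10 := mkEntry ψ (x₀ (t + θ)) 1 0) (a11 := mkEntry ψ (x₀ (t + θ)) 1 1) (t := t)
      (hv' t 0) (hv' t 1)
      (mk_comp_ode0 (hYs t) 0) (mk_comp_ode0 (hYs t) 1)
      (mk_comp_ode0 (hUs t) 0) (mk_comp_ode0 (hUs t) 1) (hWne (t + θ))
  -- gf is constant
  have hgconst : gf 0 = gf (s - T) :=
    is_const_of_deriv_eq_zero (fun t => (hgd t).differentiableAt)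
      (fun t => (hgd t).deriv) 0 (s - T)
  -- continuity of the integrand
  have hPc : ∀ (i : Fin 2) (g : ℝ → EuclideanSpace ℝ (Fin 2)), Continuous g →
      Continuous fun τ => g τ i := fun i g hg =>
    (EuclideanSpace.proj i : EuclideanSpace ℝ (Fin 2) →L[ℝ] ℝ).continuous.comp hg
  have hcb : Continuous fun τ => φ (τ - θ) (x₀ τ) :=
    hφcont.comp ((continuous_id.sub continuous_const).prodMk hx₀c)
  have hcu : Continuous fun τ => ψ (x₀ τ) := hψ1.continuous.comp hx₀c
  have hfc : Continuous hfun := by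
    rw [hhfun]
    exact ((continuous_const.mul (((hPc 0 _ hcb).mul (hPc 1 y hyc)).sub
        ((hPc 1 _ hcb).mul (hPc 0 y hyc)))).add
      (continuous_const.mul (((hPc 1 _ hcb).mul (hPc 0 _ hcu)).sub
        ((hPc 0 _ hcb).mul (hPc 1 _ hcu))))).div
      (((hPc 1 y hyc).mul (hPc 0 _ hcu)).sub ((hPc 0 y hyc).mul (hPc 1 _ hcu))) hWne
  have hInt : IntervalIntegrable (fun t => hfun (t + θ)) MeasureTheory.volume (s - T) s :=
    (hfc.comp (continuous_id.add continuous_const)).intervalIntegrable _ _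
  have hFTC : ∫ t in (s - T)..s, hfun (t + θ) = Gf s - Gf (s - T) :=
    intervalIntegral.integral_eq_sub_of_hasDerivAt (fun t _ => hGd t) hInt
  -- endpoint values
  have hGs : Gf s = 0 := by
    rw [hGf]
    simp [mkQuot, hηinit s (x₀ θ)]
  have hgsT : gf (s - T) = -Gf (s - T) := by
    rw [hGf, hgf]
    simp only [mkQuot]
    rw [show s - T + T = s by ring, hηinit s (x₀ θ)]
    rw [← neg_div]
    congr 1
    simp only [PiLp.zero_apply]
    ring
  -- left-hand side equals gf 0
  have hLHS : ⟪η T s (x₀ θ) - η 0 s (x₀ θ), N θ⟫ = gf 0 := by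
    rw [hgf]
    simp only [mkQuot, zero_add]
    rw [eq_div_iff (hWne θ)]
    simp only [PiLp.inner_apply, RCLike.inner_apply, Fin.sum_univ_two, PiLp.sub_apply,
      starRingEnd_apply, star_trivial, hc₁, hc₂]
    ring
  -- the integrand of the statement equals hfun
  have hIeq : ∀ τ : ℝ, (⟪d τ 0 • φ (τ - θ) (x₀ τ),
      ⟪ψ (x₀ θ), N θ⟫ • topVec (y τ) + ⟪y θ, N θ⟫ • perpVec (ψ (x₀ τ))⟫ : ℝ) = hfun τ := by
    intro τ
    have hdval : d τ 0 = (y τ 1 * ψ (x₀ τ) 0 - y τ 0 * ψ (x₀ τ) 1)⁻¹ := by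
      rw [hd, add_zero, hD, rowsMatrix]
      simp [topVec, perpVec, Matrix.det_fin_two_of]
    rw [hhfun, hdval]
    simp only [PiLp.inner_apply, RCLike.inner_apply, Fin.sum_univ_two, PiLp.add_apply,
      PiLp.smul_apply, smul_eq_mul, starRingEnd_apply, star_trivial, topVec, perpVec,
      Matrix.cons_val_zero, Matrix.cons_val_one, Matrix.head_cons, hc₁, hc₂, div_eq_mul_inv]
    ring
  -- conclusion
  calc ⟪η T s (x₀ θ) - η 0 s (x₀ θ), N θ⟫ = gf 0 := hLHS
    _ = gf (s - T) := hgconst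
    _ = -Gf (s - T) := hgsT
    _ = Gf s - Gf (s - T) := by rw [hGs]; ring
    _ = ∫ t in (s - T)..s, hfun (t + θ) := hFTC.symm
    _ = ∫ τ in (s - T + θ)..(s + θ), hfun τ := intervalIntegral.integral_comp_add_right hfun θ
    _ = ∫ τ in (s - T + θ)..(s + θ), (⟪d τ 0 • φ (τ - θ) (x₀ τ),
        ⟪ψ (x₀ θ), N θ⟫ • topVec (y τ) + ⟪y θ, N θ⟫ • perpVec (ψ (x₀ τ))⟫ : ℝ) := by
      apply intervalIntegral.integral_congr
      intro τ _
      exact (hIeq τ).symm
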